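/- Fix β, γ, μ > 0 and a continuously differentiable feature φ : ℝ → ℝ^N. Define N_t = 1 + μ⟨φ(t),φ(t)⟩ and e_y(t) = ⟨θ(t) - θ*, φ(t)⟩. Then the pair of first-order ODEs ϑ'(t) = -γ φ(t) e_y(t), θ'(t) = -β(θ(t) - ϑ(t)) N_t implies that θ satisfies the second-order ODE θ''(t) + [β N_t - N_t'/N_t] θ'(t) = -γ β N_t φ(t) e_y(t). -/

import Mathlib

local notation "⟪" x ", " y "⟫" => @inner ℝ _ _ x y

/-- The pair of first-order ODEs `ϑ' = -γ φ e_y`, `θ' = -β(θ - ϑ)N_t` (with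
`N_t = 1 + μ⟨φ,φ⟩` and `e_y = ⟨θ - θ*, φ⟩`) implies that `θ` satisfies the second-order
ODE `θ'' + [βN_t - N_t'/N_t]θ' = -γβN_t φ e_y`. -/
theorem stmt_8 {d : ℕ} (β γ μ : ℝ) (hβ : 0 < β) (hγ : 0 < γ) (hμ : 0 < μ)
    (φ φ' : ℝ → EuclideanSpace ℝ (Fin d))
    (hφ : ∀ t : ℝ, HasDerivAt φ (φ' t) t) (hφ'c : Continuous φ')
    (θstar : EuclideanSpace ℝ (Fin d))
    (θ ϑ : ℝ → EuclideanSpace ℝ (Fin d))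
    (Nt : ℝ → ℝ) (hNt : Nt = fun t => 1 + μ * ⟪φ t, φ t⟫)
    (hϑ : ∀ t : ℝ, HasDerivAt ϑ ((-γ * ⟪θ t - θstar, φ t⟫) • φ t) t)
    (hθ : ∀ t : ℝ, HasDerivAt θ ((-(β * Nt t)) • (θ t - ϑ t)) t) :
    ∀ t : ℝ, HasDerivAt (fun s => (-(β * Nt s)) • (θ s - ϑ s))
      (-((β * Nt t - deriv Nt t / Nt t) • ((-(β * Nt t)) • (θ t - ϑ t)))
        - (γ * β * Nt t) • (⟪θ t - θstar, φ t⟫ • φ t)) t := by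
  intro t
  -- derivative of Nt
  have hNd : HasDerivAt Nt (μ * (⟪φ t, φ' t⟫ + ⟪φ' t, φ t⟫)) t := by
    rw [hNt]
    exact (((hφ t).inner ℝ (hφ t)).const_mul μ).const_add 1
  have hderiv : deriv Nt t = μ * (⟪φ t, φ' t⟫ + ⟪φ' t, φ t⟫) := hNd.deriv
  have hNpos : 0 < Nt t := by
    rw [hNt]
    simp only
    have := real_inner_self_nonneg (x := φ t)
    nlinarith
  have hNne : Nt t ≠ 0 := ne_of_gt hNpos
  -- derivative of the coefficient
  have hc : HasDerivAt (fun s => -(β * Nt s)) (-(β * (μ * (⟪φ t, φ' t⟫ + ⟪φ' t, φ t⟫)))) t :=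
    ((hNd.const_mul β)).neg
  have hsub : HasDerivAt (fun s => θ s - ϑ s)
      ((-(β * Nt t)) • (θ t - ϑ t) - (-γ * ⟪θ t - θstar, φ t⟫) • φ t) t :=
    (hθ t).sub (hϑ t)
  have h := hc.smul hsub
  refine h.congr_deriv ?_
  rw [hderiv]
  set N' := μ * (⟪φ t, φ' t⟫ + ⟪φ' t, φ t⟫)
  match_scalars <;> field_simp <;> ring
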